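/- Let p be a prime, s a positive integer, and let f : F⁴ → F be given by f(i,j,k,t) = j + i·t. Then the Type II ℓ=4 graph Q(p,s,f) has girth at least 6. -/

import Mathlib

open scoped Classical

namespace TypeII4

/-- Variable nodes of the Type II ℓ=4 graph: the root `r`, the nodes `(x,j)` (j ∈ F), the
nodes `(i,j)` (i, j ∈ F), and the nodes `(i,j,k)'` (i, j, k ∈ F). -/
abbrev VN (F : Type*) := Unit ⊕ (F ⊕ ((F × F) ⊕ (F × F × F)))

/-- Constraint nodes of the Type II ℓ=4 graph: `c_x`, the nodes `c_i` (i ∈ F), the nodes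
`(x,i,j)_c` (i, j ∈ F), and the nodes `(i,j,k)_c` (i, j, k ∈ F). -/
abbrev CN (F : Type*) := Unit ⊕ (F ⊕ ((F × F) ⊕ (F × F × F)))

/-- Adjacency of the Type II ℓ=4 graph `Q(p,s,f)`:
`r ~ c_x`; `r ~ c_i`; `c_x ~ (x,j)`; `c_i ~ (i,j)`; `(x,i) ~ (x,i,j)_c`;
`(i,j) ~ (i,j,k)_c`; `(x,i,j)_c ~ (i,j,t)'` for every `t`; and
`(i,j,k)_c ~ (t, k + i·t, f(i,j,k,t))'` for every `t`. -/
def adj (F : Type*) [Field F] (f : F → F → F → F → F) : VN F → CN F → Prop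
  | Sum.inl _, Sum.inl _ => True                                  -- r ~ c_x
  | Sum.inl _, Sum.inr (Sum.inl _) => True                        -- r ~ c_i
  | Sum.inr (Sum.inl _), Sum.inl _ => True                        -- (x,j) ~ c_x
  | Sum.inr (Sum.inl i), Sum.inr (Sum.inr (Sum.inl (i', _))) =>
      i' = i                                                      -- (x,i) ~ (x,i,j)_c
  | Sum.inr (Sum.inr (Sum.inl (i, _))), Sum.inr (Sum.inl k) =>
      k = i                                                       -- c_i ~ (i,j)
  | Sum.inr (Sum.inr (Sum.inl (i, j))), Sum.inr (Sum.inr (Sum.inr (i', j', _))) =>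
      i' = i ∧ j' = j                                             -- (i,j) ~ (i,j,k)_c
  | Sum.inr (Sum.inr (Sum.inr (a, b, _))), Sum.inr (Sum.inr (Sum.inl (i, j))) =>
      i = a ∧ j = b                                               -- (x,i,j)_c ~ (i,j,t)'
  | Sum.inr (Sum.inr (Sum.inr (a, b, c))), Sum.inr (Sum.inr (Sum.inr (i, j, k))) =>
      b = k + i * a ∧ c = f i j k a               -- (i,j,k)_c ~ (t, k+i·t, f(i,j,k,t))'
  | _, _ => False

end TypeII4

/-- The simple graph on the disjoint union `V ⊕ C` associated to a bipartite adjacency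
relation between variable nodes `V` and constraint nodes `C`. -/
def bip {V C : Type*} (adj : V → C → Prop) : SimpleGraph (V ⊕ C) where
  Adj x y :=
    (∃ v c, x = Sum.inl v ∧ y = Sum.inr c ∧ adj v c) ∨
    (∃ v c, x = Sum.inr c ∧ y = Sum.inl v ∧ adj v c)
  symm := by
    constructor
    rintro x y (⟨v, c, hx, hy, h⟩ | ⟨v, c, hx, hy, h⟩)
    · exact Or.inr ⟨v, c, hy, hx, h⟩
    · exact Or.inl ⟨v, c, hy, hx, h⟩
  loopless := by
    constructor
    rintro x (⟨v, c, hx, hy, h⟩ | ⟨v, c, hx, hy, h⟩) <;> subst hx <;> simp at hy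

lemma TypeII4.key (F : Type*) [Field F] (v1 v2 : VN F) (c1 c2 : CN F)
    (hv : v1 ≠ v2) (hc : c1 ≠ c2)
    (h11 : adj F (fun i j _ t => j + i * t) v1 c1)
    (h12 : adj F (fun i j _ t => j + i * t) v1 c2)
    (h21 : adj F (fun i j _ t => j + i * t) v2 c1)
    (h22 : adj F (fun i j _ t => j + i * t) v2 c2) : False := by
  rcases v1 with _ | (m1 | (⟨i1, j1⟩ | ⟨a1, b1, d1⟩)) <;>
  rcases v2 with _ | (m2 | (⟨i2, j2⟩ | ⟨a2, b2, d2⟩)) <;>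
  rcases c1 with _ | (n1 | (⟨x1, y1⟩ | ⟨e1, g1, k1⟩)) <;>
  rcases c2 with _ | (n2 | (⟨x2, y2⟩ | ⟨e2, g2, k2⟩)) <;>
  simp_all [adj]
  obtain ⟨h1, h2⟩ := h12
  obtain ⟨h3, h4⟩ := h22
  have he : e1 * (a1 - a2) = e2 * (a1 - a2) := by linear_combination h1 - h3
  have he' : e1 = e2 := mul_right_cancel₀ (sub_ne_zero.mpr hv) he
  subst he'
  exact hc rfl (by linear_combination h2) (by linear_combination h1)

lemma bip_adj_isLeft {V C : Type*} {adj : V → C → Prop} {x y : V ⊕ C}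
    (h : (bip adj).Adj x y) : x.isLeft = !y.isLeft := by
  rcases h with ⟨v, c, hx, hy, _⟩ | ⟨v, c, hx, hy, _⟩ <;> subst hx <;> subst hy <;> rfl

lemma bip_walk_parity {V C : Type*} {adj : V → C → Prop} {x y : V ⊕ C}
    (w : (bip adj).Walk x y) : Even w.length ↔ (x.isLeft = y.isLeft) := by
  induction w with
  | nil => simp
  | cons h w ih =>
    have := bip_adj_isLeft h
    simp only [SimpleGraph.Walk.length_cons, Nat.even_add_one, ih, this]
    cases (_ : V ⊕ C).isLeft <;> cases y.isLeft <;> simp_all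

theorem stmt_14 (p s : ℕ) (hp : p.Prime) (hs : 0 < s)
    (F : Type*) [Field F] [Fintype F] (hF : Fintype.card F = p ^ s) :
    -- with f(i,j,k,t) = j + i·t, the graph Q(p,s,f) has girth at least 6
    (6 : ℕ∞) ≤ (bip (TypeII4.adj F fun i j _ t => j + i * t)).egirth := by
  rw [SimpleGraph.le_egirth]
  intro a w hw
  by_contra hlt
  push_neg at hlt
  have h3 : 3 ≤ w.length := hw.three_le_length
  have heven : Even w.length := (bip_walk_parity w).mpr rfl
  have hlen6 : w.length < 6 := by exact_mod_cast hlt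
  have hlen : w.length = 4 := by
    rcases heven with ⟨k, hk⟩; omega
  clear hlen6
  -- destructure the walk of length 4
  cases w with
  | nil => simp at hlen
  | @cons _ b _ ha1 w =>
  cases w with
  | nil => simp at hlen
  | @cons _ c _ ha2 w =>
  cases w with
  | nil => simp at hlen
  | @cons _ d _ ha3 w =>
  cases w with
  | nil => simp at hlen
  | @cons _ e _ ha4 w =>
  cases w with
  | cons h5 w => simp [SimpleGraph.Walk.length_cons] at hlen
  | nil =>
  -- nodup facts
  have hnd := hw.2
  simp only [SimpleGraph.Walk.support_cons, SimpleGraph.Walk.support_nil,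
    List.tail_cons, List.nodup_cons, List.mem_cons, List.mem_singleton,
    List.not_mem_nil, List.nodup_nil] at hnd
  have hac : a ≠ c := fun h => by simp [h] at hnd
  have hbd : b ≠ d := fun h => by simp [h] at hnd
  -- orientations
  rcases ha1 with ⟨va, cb, rfl, rfl, hab⟩ | ⟨vb, ca, rfl, rfl, hab⟩
  · rcases ha2 with ⟨v, c', h', rfl, h⟩ | ⟨vc, cb', h', rfl, hcb⟩
    · simp at h'
    · obtain rfl := Sum.inr.inj h'
      rcases ha3 with ⟨v', cd, h', rfl, hcd⟩ | ⟨v', c', h', rfl, h⟩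
      · obtain rfl := Sum.inl.inj h'
        rcases ha4 with ⟨v', c', h', he, h⟩ | ⟨va', cd', h', he, had⟩
        · simp at h'
        · obtain rfl := Sum.inr.inj h'
          obtain rfl := Sum.inl.inj he
          exact TypeII4.key F va vc cb cd (fun h => hac (congrArg Sum.inl h))
            (fun h => hbd (congrArg Sum.inr h)) hab had hcb hcd
      · simp at h'
  · rcases ha2 with ⟨vb', cc, h', rfl, hbc⟩ | ⟨v, c', h', rfl, h⟩
    · obtain rfl := Sum.inl.inj h'
      rcases ha3 with ⟨v', c', h', rfl, h⟩ | ⟨vd, cc', h', rfl, hdc⟩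
      · simp at h'
      · obtain rfl := Sum.inr.inj h'
        rcases ha4 with ⟨vd', ca', h', he, hda⟩ | ⟨v', c', h', he, h⟩
        · obtain rfl := Sum.inl.inj h'
          obtain rfl := Sum.inr.inj he
          exact TypeII4.key F vb vd ca cc (fun h => hbd (congrArg Sum.inl h))
            (fun h => hac (congrArg Sum.inr h)) hab hbc hda hdc
        · simp at h'
    · simp at h'
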